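/- arXiv:1605.07727 — 6 statements merged into one kernel-verified Lean document; each statement's English description precedes it below -/
import Mathlib

section
/- Let Δ be a simplicial forest and let W be any subset of the vertex set V(Δ). Then the simplicial complex whose facets are the minimal elements under inclusion of the nonempty sets {F ∩ W : F a facet of Δ} is again a simplicial forest. (This is the combinatorial content of the statement that the localization of the facet ideal of a simplicial forest at any prime ideal is again the facet ideal of a simplicial forest.) -/
namespace FacetPaper

variable (k : Type*) [Field k]
variable {V : Type*} [DecidableEq V] [LinearOrder V]

/-- The vertex set of a simplicial complex given by its (finite) set of facets. -/
def vertexSet (Δ : Finset (Finset V)) : Finset V := Δ.sup id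

/-- The induced subcollection `Δ_[u]`: the complex whose facets are the facets
of `Δ` contained in `u`. -/
def induced (Δ : Finset (Finset V)) (u : Finset V) : Finset (Finset V) :=
  Δ.filter (fun F => F ⊆ u)

/-- `F` is a leaf of the complex with facet set `Δ`. -/
def IsLeaf (Δ : Finset (Finset V)) (F : Finset V) : Prop :=
  F ∈ Δ ∧ (Δ = {F} ∨ ∃ G ∈ Δ, G ≠ F ∧ ∀ H ∈ Δ, H ≠ F → F ∩ H ⊆ G)

/-- A simplicial forest: every nonempty subcollection has a leaf. -/
def IsForest (Δ : Finset (Finset V)) : Prop :=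
  ∀ Γ ⊆ Δ, Γ.Nonempty → ∃ F, IsLeaf Γ F

/-- The facet `F` has a free vertex: a vertex of `F` lying in no other facet. -/
def HasFreeVertex (Δ : Finset (Finset V)) (F : Finset V) : Prop :=
  ∃ x ∈ F, ∀ G ∈ Δ, x ∈ G → G = F

/-- Minimal elements, under inclusion, of a finite family of finite sets. -/
def minimals (S : Finset (Finset V)) : Finset (Finset V) :=
  S.filter (fun A => ∀ B ∈ S, B ⊆ A → B = A)

/-- The localization (restriction) `Δ_W`: minimal elements of the nonempty
intersections of facets with `W`. -/
def localization (Δ : Finset (Finset V)) (W : Finset V) : Finset (Finset V) :=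
  minimals ((Δ.image (fun F => F ∩ W)).filter (fun A => A.Nonempty))

/-- `Γ = (Δ ∖ ⟨F⟩)_{F̄}`: the minimal elements under inclusion of
`{G ∖ F : G a facet of Δ, G ≠ F}`. -/
def gammaOf (Δ : Finset (Finset V)) (F : Finset V) : Finset (Finset V) :=
  minimals ((Δ.erase F).image (fun G => G \ F))

/-- `Δ_[u]` and `Δ_[v]` are complements in `Δ`: `u`, `v` are proper subsets of the
vertex set, `u ∪ v = V(Δ)`, and `Δ_[u]`, `Δ_[v]` have no facet in common. -/
def Complements (Δ : Finset (Finset V)) (u v : Finset V) : Prop :=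
  u ⊂ vertexSet Δ ∧ v ⊂ vertexSet Δ ∧ u ∪ v = vertexSet Δ ∧
    ∀ F ∈ Δ, ¬ (F ∈ induced Δ u ∧ F ∈ induced Δ v)

/-! ### Graded Betti numbers via the Taylor complex

For a square-free monomial ideal `I` with facet complex `Δ` (facets = supports of
the minimal monomial generators), the Taylor complex is a graded free resolution of
`S/I`, so `Tor_i^S(S/I,k)` is the `i`-th homology of the Taylor complex tensored
with `k`.  The resulting complex of `k`-vector spaces has basis the subsets `σ` of
the set of generators, a basis element `σ` sitting in homological degree `|σ|` and
multidegree `lcm σ` (= the union of the supports), with differential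
`∂σ = Σ_{F ∈ σ, lcm(σ∖F) = lcm σ} ± (σ ∖ F)`.  The multigraded Betti number
`β_{i,u}(S/I) = dim_k Tor_i(S/I,k)_u` is the dimension of the homology of the
multidegree-`u` strand in homological degree `i`. -/

/-- The sign `(-1)^{position of F in σ}` (using the colexicographic order). -/
noncomputable def taylorSign (σ : Finset (Finset V)) (F : Finset V) : k :=
  (-1 : k) ^ (σ.filter (fun G => toColex G < toColex F)).card

/-- The Taylor differential (tensored with `k`) on a basis element. -/
noncomputable def taylorD (σ : Finset (Finset V)) : Finset (Finset V) →₀ k :=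
  ∑ F ∈ σ, if (σ.erase F).sup id = σ.sup id then
    taylorSign k σ F • Finsupp.single (σ.erase F) (1 : k) else 0

/-- The Taylor differential as a linear map. -/
noncomputable def taylorDiff : (Finset (Finset V) →₀ k) →ₗ[k] (Finset (Finset V) →₀ k) :=
  Finsupp.lsum k (fun σ => LinearMap.toSpanSingleton k _ (taylorD k σ))

/-- The strand of the Taylor complex (tensored with `k`) of the complex `Δ` in
homological degree `i` and multidegree `u`. -/
noncomputable def strand (Δ : Finset (Finset V)) (i : ℕ) (u : Finset V) :
    Submodule k (Finset (Finset V) →₀ k) :=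
  Submodule.span k
    {x | ∃ σ : Finset (Finset V), σ ⊆ Δ ∧ σ.card = i ∧ σ.sup id = u ∧
      x = Finsupp.single σ (1 : k)}

/-- Cycles of the multidegree-`u` strand in homological degree `i`. -/
noncomputable def taylorCycles (Δ : Finset (Finset V)) (i : ℕ) (u : Finset V) :
    Submodule k (Finset (Finset V) →₀ k) :=
  LinearMap.ker (taylorDiff k) ⊓ strand k Δ i u

/-- Boundaries of the multidegree-`u` strand in homological degree `i`. -/
noncomputable def taylorBoundaries (Δ : Finset (Finset V)) (i : ℕ) (u : Finset V) :
    Submodule k (Finset (Finset V) →₀ k) :=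
  Submodule.map (taylorDiff k) (strand k Δ (i + 1) u)

/-- The multigraded Betti number `β_{i,u}(Δ) = dim_k Tor_i^S(S/F(Δ), k)_u`,
computed as the homology (dimension of cycles minus dimension of boundaries; all
these spaces are finite dimensional and the boundaries lie inside the cycles) of
the multidegree-`u` strand of the Taylor complex tensored with `k`. -/
noncomputable def multigradedBetti (Δ : Finset (Finset V)) (i : ℕ) (u : Finset V) : ℕ :=
  Module.finrank k ↥(taylorCycles k Δ i u) -
    Module.finrank k ↥(taylorBoundaries k Δ i u ⊓ taylorCycles k Δ i u)

/-- The graded Betti number `β_{i,j}(Δ) = dim_k Tor_i^S(S/F(Δ), k)_j`, the sum of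
the multigraded Betti numbers over the square-free multidegrees of degree `j`
supported on the vertices of `Δ`. -/
noncomputable def gradedBetti (Δ : Finset (Finset V)) (i j : ℕ) : ℕ :=
  ∑ u ∈ (vertexSet Δ).powersetCard j, multigradedBetti k Δ i u

/-- `t_c(I)`:  the largest internal degree `j` with `β_{c,j} ≠ 0`. -/
noncomputable def tdeg (Δ : Finset (Finset V)) (c : ℕ) : ℕ :=
  sSup {j | gradedBetti k Δ c j ≠ 0}

/-- The projective dimension of `S/F(Δ)`: the largest homological degree with a
nonvanishing Betti number. -/
noncomputable def projDim (Δ : Finset (Finset V)) : ℕ :=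
  sSup {c | ∃ j, gradedBetti k Δ c j ≠ 0}

/-- Membership in the lcm lattice `LCM(I)`: `m_u` is an lcm of a set of generators. -/
def MemLcmLattice (Δ : Finset (Finset V)) (u : Finset V) : Prop :=
  ∃ A ⊆ Δ, u = A.sup id

/-- `m_u` and `m_v` are complements in the lcm lattice: their lcm is `1̂` (the lcm of
all the generators) and their gcd `m_{u ∩ v}` is not in the ideal (no generator
divides it). -/
def LcmComplements (Δ : Finset (Finset V)) (u v : Finset V) : Prop :=
  u ∪ v = vertexSet Δ ∧ ¬ ∃ F ∈ Δ, F ⊆ u ∩ v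


/-- Localization of a forest is a forest.  If `Δ` is a simplicial
forest and `W ⊆ V(Δ)`, then the complex whose facets are the minimal elements under
inclusion of the nonempty sets `{F ∩ W : F a facet of Δ}` is again a simplicial
forest. -/
theorem isForest_localization
    (Δ : Finset (Finset V)) (hfacet : IsAntichain (· ⊆ ·) (Δ : Set (Finset V)))
    (hforest : IsForest Δ) (W : Finset V) (hW : W ⊆ vertexSet Δ) :
    IsForest (localization Δ W) := by
  classical
  intro Γ hΓ hne
  -- every member of Γ is F ∩ W for some F ∈ Δ
  have hmem : ∀ A ∈ Γ, ∃ F ∈ Δ, F ∩ W = A := by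
    intro A hA
    have hA' := hΓ hA
    simp only [localization, minimals, Finset.mem_filter, Finset.mem_image] at hA'
    obtain ⟨⟨⟨F, hF, hFA⟩, -⟩, -⟩ := hA'
    exact ⟨F, hF, hFA⟩
  -- a choice of lift
  set g : Finset V → Finset V := fun A =>
    if h : ∃ F ∈ Δ, F ∩ W = A then h.choose else ∅ with hg
  have hgΔ : ∀ A ∈ Γ, g A ∈ Δ := by
    intro A hA
    have h := hmem A hA
    simp only [hg, dif_pos h]
    exact h.choose_spec.1
  have hgW : ∀ A ∈ Γ, g A ∩ W = A := by
    intro A hA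
    have h := hmem A hA
    simp only [hg, dif_pos h]
    exact h.choose_spec.2
  set Γ' : Finset (Finset V) := Γ.image g with hΓ'
  have hΓ'Δ : Γ' ⊆ Δ := by
    intro F hF
    simp only [hΓ', Finset.mem_image] at hF
    obtain ⟨A, hA, rfl⟩ := hF
    exact hgΔ A hA
  obtain ⟨F', hF'⟩ := hforest Γ' hΓ'Δ (hne.image g)
  obtain ⟨hF'mem, hcase⟩ := hF'
  simp only [hΓ', Finset.mem_image] at hF'mem
  obtain ⟨A0, hA0, hgA0⟩ := hF'mem
  refine ⟨A0, hA0, ?_⟩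
  rcases hcase with hsingle | ⟨G, hG, hGne, hjoint⟩
  · -- Γ' = {F'}: then Γ = {A0}
    left
    apply Finset.eq_singleton_iff_unique_mem.2
    refine ⟨hA0, fun A hA => ?_⟩
    have hgA : g A ∈ Γ' := Finset.mem_image_of_mem g hA
    rw [hsingle, Finset.mem_singleton] at hgA
    rw [← hgW A hA, hgA, ← hgA0, hgW A0 hA0]
  · -- joint case
    right
    simp only [hΓ', Finset.mem_image] at hG
    obtain ⟨B, hB, hgB⟩ := hG
    refine ⟨B, hB, ?_, ?_⟩
    · intro hBA0
      apply hGne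
      rw [← hgB, hBA0, hgA0]
    · intro C hC hCne
      have hgC : g C ∈ Γ' := Finset.mem_image_of_mem g hC
      have hgCne : g C ≠ F' := by
        intro h
        apply hCne
        rw [← hgW C hC, h, ← hgA0, hgW A0 hA0]
      have hsub : F' ∩ g C ⊆ G := hjoint (g C) hgC hgCne
      intro x hx
      rw [Finset.mem_inter] at hx
      obtain ⟨hx0, hxC⟩ := hx
      rw [← hgW A0 hA0, Finset.mem_inter] at hx0
      rw [← hgW C hC, Finset.mem_inter] at hxC
      rw [← hgW B hB, Finset.mem_inter]
      refine ⟨?_, hx0.2⟩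
      have hxG : x ∈ G := hsub (Finset.mem_inter.2 ⟨hgA0 ▸ hx0.1, hxC.1⟩)
      rwa [← hgB] at hxG

end FacetPaper
end

section
/- Let Δ be a simplicial complex on n vertices with more than one facet, let F be a facet of Δ having a free vertex, and let Γ = (Δ∖⟨F⟩)_{F̄} be the simplicial complex whose facets are the minimal elements under inclusion of {G∖F : G a facet of Δ, G ≠ F}. Then for every i ≥ 1, β_{i,n}(Δ) = β_{i−1, n−|F|}(Γ). -/
namespace FacetPaper

variable (k : Type*) [Field k]
variable {V : Type*} [DecidableEq V] [LinearOrder V]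

/-! ### Auxiliary development -/



/-- Generalized Taylor differential on a basis element, w.r.t. a support function `s`. -/
noncomputable def gD (s : Finset V → Finset V) (σ : Finset (Finset V)) :
    Finset (Finset V) →₀ k :=
  ∑ F ∈ σ, if (σ.erase F).sup s = σ.sup s then
    taylorSign k σ F • Finsupp.single (σ.erase F) (1 : k) else 0

/-- Generalized Taylor differential as a linear map. -/
noncomputable def gDiff (s : Finset V → Finset V) :
    (Finset (Finset V) →₀ k) →ₗ[k] (Finset (Finset V) →₀ k) :=
  Finsupp.lsum k (fun σ => LinearMap.toSpanSingleton k _ (gD k s σ))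

/-- Generalized strand. -/
noncomputable def gStrand (s : Finset V → Finset V) (S : Finset (Finset V)) (i : ℕ)
    (u : Finset V) : Submodule k (Finset (Finset V) →₀ k) :=
  Submodule.span k
    {x | ∃ σ : Finset (Finset V), σ ⊆ S ∧ σ.card = i ∧ σ.sup s = u ∧
      x = Finsupp.single σ (1 : k)}

/-- Generalized multigraded Betti number. -/
noncomputable def gBetti (s : Finset V → Finset V) (S : Finset (Finset V)) (i : ℕ)
    (u : Finset V) : ℕ :=
  Module.finrank k ↥(LinearMap.ker (gDiff k s) ⊓ gStrand k s S i u) -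
    Module.finrank k ↥(Submodule.map (gDiff k s) (gStrand k s S (i + 1) u) ⊓
      (LinearMap.ker (gDiff k s) ⊓ gStrand k s S i u))

lemma taylorD_eq_gD : taylorD k (V := V) = gD k id := rfl

lemma taylorDiff_eq_gDiff : taylorDiff k (V := V) = gDiff k id := rfl

lemma strand_eq_gStrand : strand k (V := V) = gStrand k id := rfl

lemma multigradedBetti_eq_gBetti (Δ : Finset (Finset V)) (i : ℕ) (u : Finset V) :
    multigradedBetti k Δ i u = gBetti k id Δ i u := rfl

lemma gDiff_single (s : Finset V → Finset V) (σ : Finset (Finset V)) (c : k) :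
    gDiff k s (Finsupp.single σ c) = c • gD k s σ := by
  simp [gDiff, LinearMap.toSpanSingleton_apply]
set_option linter.unusedSectionVars false

/-! #### Sign lemmas -/

lemma neg_one_pow_filter_erase (p : Finset V → Prop) [DecidablePred p]
    {τ : Finset (Finset V)} {G : Finset V} (hG : G ∈ τ) :
    ((-1 : k) ^ ((τ.erase G).filter p).card) =
      (if p G then -1 else 1) * (-1 : k) ^ ((τ.filter p).card) := by
  rw [Finset.filter_erase]
  by_cases h : p G
  · have hGf : G ∈ τ.filter p := Finset.mem_filter.mpr ⟨hG, h⟩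
    rw [Finset.card_erase_of_mem hGf, if_pos h]
    obtain ⟨m, hm⟩ := Nat.exists_eq_succ_of_ne_zero (Finset.card_ne_zero_of_mem hGf)
    rw [hm]
    simp [pow_succ]
  · rw [Finset.erase_eq_of_notMem (fun hc => h (Finset.mem_filter.mp hc).2), if_neg h, one_mul]

lemma taylorSign_erase {τ : Finset (Finset V)} {G H : Finset V} (hG : G ∈ τ) :
    taylorSign k (τ.erase G) H =
      (if toColex G < toColex H then -1 else 1) * taylorSign k τ H :=
  neg_one_pow_filter_erase k _ hG

lemma taylorSign_mul_self (σ : Finset (Finset V)) (F : Finset V) :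
    taylorSign k σ F * taylorSign k σ F = 1 := by
  rw [taylorSign, ← mul_pow]
  norm_num

lemma toColex_ne {G H : Finset V} (h : G ≠ H) :
    toColex G ≠ toColex H :=
  fun hc => h (congrArg ofColex hc)

lemma ite_lt_anticomm {G H : Finset V} (h : G ≠ H) :
    (if toColex G < toColex H then (-1 : k) else 1) *
      (if toColex H < toColex G then (-1 : k) else 1) = -1 := by
  rcases lt_trichotomy (toColex G) (toColex H) with hlt | heq | hgt
  · rw [if_pos hlt, if_neg (asymm hlt)]; ring
  · exact absurd heq (toColex_ne h)
  · rw [if_neg (asymm hgt), if_pos hgt]; ring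

lemma taylorSign_anticomm {σ : Finset (Finset V)} {G H : Finset V}
    (hG : G ∈ σ) (hH : H ∈ σ) (hne : G ≠ H) :
    taylorSign k σ H * taylorSign k (σ.erase H) G =
      -(taylorSign k σ G * taylorSign k (σ.erase G) H) := by
  rw [taylorSign_erase k hH, taylorSign_erase k hG]
  rcases lt_trichotomy (toColex G) (toColex H) with hlt | heq | hgt
  · rw [if_pos hlt, if_neg (asymm hlt)]; ring
  · exact absurd heq (toColex_ne hne)
  · rw [if_neg (asymm hgt), if_pos hgt]; ring
/-! #### Sup lemmas and `d ∘ d = 0` -/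

lemma sup_eq_erase_sup {s : Finset V → Finset V} {σ : Finset (Finset V)} {G : Finset V}
    (hG : G ∈ σ) : σ.sup s = s G ⊔ (σ.erase G).sup s := by
  conv_lhs => rw [← Finset.insert_erase hG]
  rw [Finset.sup_insert]

lemma sup_insert_of_le {s : Finset V → Finset V} {τ : Finset (Finset V)} {y : Finset V}
    (h : s y ≤ τ.sup s) : (insert y τ).sup s = τ.sup s := by
  rw [Finset.sup_insert, sup_eq_right.mpr h]

lemma cond_step {s : Finset V → Finset V} {σ : Finset (Finset V)} {G H : Finset V}
    (hne : H ≠ G)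
    (h1 : (σ.erase G).sup s = σ.sup s) (h2 : ((σ.erase G).erase H).sup s = (σ.erase G).sup s) :
    (σ.erase H).sup s = σ.sup s ∧ ((σ.erase H).erase G).sup s = (σ.erase H).sup s := by
  have hsub : (σ.erase G).erase H ⊆ σ.erase H :=
    Finset.erase_subset_erase _ (Finset.erase_subset _ _)
  have h3 : ((σ.erase G).erase H).sup s = σ.sup s := h2.trans h1
  have hA : (σ.erase H).sup s = σ.sup s :=
    le_antisymm (Finset.sup_mono (Finset.erase_subset _ _)) (h3 ▸ Finset.sup_mono hsub)
  refine ⟨hA, ?_⟩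
  rw [Finset.erase_right_comm, h3, hA]

lemma sum_pairs_eq_zero {M : Type*} [AddCommGroup M] (σ : Finset (Finset V))
    (u : Finset V → Finset V → M)
    (hanti : ∀ G ∈ σ, ∀ H ∈ σ, G ≠ H → u G H + u H G = 0) :
    ∑ G ∈ σ, ∑ H ∈ σ.erase G, u G H = 0 := by
  have h1 : ∀ G ∈ σ, ∑ H ∈ σ.erase G, u G H =
      ∑ H ∈ σ, (if H = G then 0 else u G H) := by
    intro G _
    refine (Finset.sum_congr rfl (fun H hH => (if_neg (Finset.ne_of_mem_erase hH)).symm)).trans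
      (Finset.sum_erase (f := fun H => if H = G then 0 else u G H) (a := G) σ (if_pos rfl))
  rw [Finset.sum_congr rfl h1, ← Finset.sum_product σ σ
    (fun p => if p.2 = p.1 then 0 else u p.1 p.2)]
  refine Finset.sum_involution (fun p _ => (p.2, p.1)) ?_ ?_ ?_ ?_
  · intro p hp
    rcases Finset.mem_product.mp hp with ⟨h1', h2'⟩
    by_cases he : p.2 = p.1
    · simp [he]
    · rw [if_neg he, if_neg (fun hc => he hc.symm)]
      exact hanti _ h1' _ h2' (fun hc => he hc.symm)
  · intro p _ hne
    by_cases he : p.2 = p.1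
    · exact absurd (if_pos he) hne
    · exact fun hc => he (congrArg Prod.fst hc)
  · intro p hp
    rcases Finset.mem_product.mp hp with ⟨h1', h2'⟩
    exact Finset.mem_product.mpr ⟨h2', h1'⟩
  · intro p _
    rfl

lemma gDiff_gD (s : Finset V → Finset V) (σ : Finset (Finset V)) :
    gDiff k s (gD k s σ) = 0 := by
  rw [gD, map_sum]
  have hterm : ∀ G, gDiff k s (if (σ.erase G).sup s = σ.sup s then
      taylorSign k σ G • Finsupp.single (σ.erase G) (1:k) else 0) =
      ∑ H ∈ σ.erase G, (if (((σ.erase G).sup s = σ.sup s) ∧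
          ((σ.erase G).erase H).sup s = (σ.erase G).sup s) then
        (taylorSign k σ G * taylorSign k (σ.erase G) H) •
          Finsupp.single ((σ.erase G).erase H) (1:k) else 0) := by
    intro G
    split_ifs with h1
    · rw [map_smul, gDiff_single, one_smul, gD, Finset.smul_sum]
      refine Finset.sum_congr rfl (fun H _ => ?_)
      split_ifs with h2 h3 h4
      · rw [smul_smul]
      · exact absurd ⟨h1, h2⟩ h3
      · exact absurd h4.2 h2
      · rw [smul_zero]
    · rw [map_zero, eq_comm]
      refine Finset.sum_eq_zero (fun H _ => if_neg (fun hc => h1 hc.1))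
  rw [Finset.sum_congr rfl (fun G _ => hterm G)]
  refine sum_pairs_eq_zero σ _ (fun G hG H hH hne => ?_)
  by_cases hc : ((σ.erase G).sup s = σ.sup s) ∧ ((σ.erase G).erase H).sup s = (σ.erase G).sup s
  · have hc' := cond_step (hne := fun h => hne h.symm) hc.1 hc.2
    rw [if_pos hc, if_pos hc',
      show (σ.erase H).erase G = (σ.erase G).erase H from Finset.erase_right_comm,
      ← add_smul, taylorSign_anticomm k hG hH hne]
    simp
  · have hc' : ¬ (((σ.erase H).sup s = σ.sup s) ∧
        ((σ.erase H).erase G).sup s = (σ.erase H).sup s) :=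
      fun h => hc (cond_step (hne := hne) h.1 h.2)
    rw [if_neg hc, if_neg hc', add_zero]

lemma gDiff_gDiff (s : Finset V → Finset V) (v : Finset (Finset V) →₀ k) :
    gDiff k s (gDiff k s v) = 0 := by
  have h : (gDiff k s).comp (gDiff k s) = 0 := by
    apply Finsupp.lhom_ext
    intro σ c
    simp [LinearMap.comp_apply, gDiff_single, map_smul, gDiff_gD]
  simpa using LinearMap.congr_fun h v
/-! #### Strand basics -/

lemma gStrand_eq_span_image (s : Finset V → Finset V) (S : Finset (Finset V)) (i : ℕ)
    (u : Finset V) : gStrand k s S i u = Submodule.span k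
      ((fun σ => Finsupp.single σ (1 : k)) ''
        ↑((S.powersetCard i).filter (fun σ => σ.sup s = u))) := by
  rw [gStrand]
  apply congrArg
  ext x
  simp only [Set.mem_setOf_eq, Set.mem_image, Finset.mem_coe,
    Finset.mem_filter, Finset.mem_powersetCard]
  constructor
  · rintro ⟨σ, h1, h2, h3, rfl⟩; exact ⟨σ, ⟨⟨h1, h2⟩, h3⟩, rfl⟩
  · rintro ⟨σ, ⟨⟨h1, h2⟩, h3⟩, rfl⟩; exact ⟨σ, h1, h2, h3, rfl⟩

instance gStrand_fd (s : Finset V → Finset V) (S : Finset (Finset V)) (i : ℕ) (u : Finset V) :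
    FiniteDimensional k ↥(gStrand k s S i u) := by
  rw [gStrand_eq_span_image]
  exact FiniteDimensional.span_of_finite k ((Finset.finite_toSet _).image _)

lemma single_mem_gStrand {s : Finset V → Finset V} {S : Finset (Finset V)} {i : ℕ}
    {u : Finset V} {σ : Finset (Finset V)} (h1 : σ ⊆ S) (h2 : σ.card = i) (h3 : σ.sup s = u) :
    Finsupp.single σ (1 : k) ∈ gStrand k s S i u :=
  Submodule.subset_span ⟨σ, h1, h2, h3, rfl⟩

lemma gDiff_gStrand_le (s : Finset V → Finset V) (S : Finset (Finset V)) (i : ℕ) (u : Finset V) :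
    Submodule.map (gDiff k s) (gStrand k s S (i + 1) u) ≤ gStrand k s S i u := by
  rw [Submodule.map_le_iff_le_comap, gStrand, Submodule.span_le]
  rintro x ⟨σ, hσS, hcard, hsup, rfl⟩
  simp only [SetLike.mem_coe, Submodule.mem_comap]
  rw [gDiff_single, one_smul, gD]
  refine Submodule.sum_mem _ (fun G hG => ?_)
  split_ifs with hc
  · refine Submodule.smul_mem _ _ (single_mem_gStrand k ((Finset.erase_subset _ _).trans hσS)
      (by simp [Finset.card_erase_of_mem hG, hcard]) (by rw [hc, hsup]))
  · exact Submodule.zero_mem _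

/-! #### Abstract finrank lemmas -/

section Abstract
variable {E : Type*} [AddCommGroup E] [Module k E]

lemma map_eq_self_of_forall {f : E →ₗ[k] E} {p : Submodule k E} (h : ∀ v ∈ p, f v = v) :
    Submodule.map f p = p := by
  apply le_antisymm
  · rintro x ⟨v, hv, rfl⟩
    rw [h v hv]; exact hv
  · intro v hv
    exact ⟨v, hv, h v hv⟩

lemma finrank_map_eq_of_leftinv {Φ Ψ : E →ₗ[k] E} {p : Submodule k E} [FiniteDimensional k p]
    (h : ∀ v ∈ p, Ψ (Φ v) = v) :
    Module.finrank k ↥(Submodule.map Φ p) = Module.finrank k ↥p := by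
  refine le_antisymm (Submodule.finrank_map_le _ _) ?_
  have h2 : Submodule.map Ψ (Submodule.map Φ p) = p := by
    apply le_antisymm
    · rintro x ⟨y, ⟨v, hv, rfl⟩, rfl⟩
      rw [h v hv]; exact hv
    · intro v hv
      exact ⟨Φ v, ⟨v, hv, rfl⟩, h v hv⟩
  calc Module.finrank k ↥p = Module.finrank k ↥(Submodule.map Ψ (Submodule.map Φ p)) := by
        rw [h2]
    _ ≤ Module.finrank k ↥(Submodule.map Φ p) := Submodule.finrank_map_le _ _

lemma deletion_finrank (d h : E →ₗ[k] E) (A B A' B' : Submodule k E)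
    [FiniteDimensional k ↥A]
    (hd2 : ∀ v, d (d v) = 0)
    (hA' : A' ≤ A) (hB' : B' ≤ B)
    (hcA : ∀ v ∈ A, v - d (h v) - h (d v) ∈ A')
    (hcB : ∀ v ∈ B, v - d (h v) - h (d v) ∈ B')
    (hh0 : ∀ v ∈ A', h v = 0)
    (hhB : ∀ v ∈ A, h v ∈ B) :
    Module.finrank k ↥(LinearMap.ker d ⊓ A) -
      Module.finrank k ↥(Submodule.map d B ⊓ (LinearMap.ker d ⊓ A)) =
    Module.finrank k ↥(LinearMap.ker d ⊓ A') -
      Module.finrank k ↥(Submodule.map d B' ⊓ (LinearMap.ker d ⊓ A')) := by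
  set r : E →ₗ[k] E := LinearMap.id - d ∘ₗ h - h ∘ₗ d with hr
  have hrv : ∀ v, r v = v - d (h v) - h (d v) := fun v => by
    simp [hr, LinearMap.sub_apply, LinearMap.comp_apply]
  set Z := LinearMap.ker d ⊓ A with hZdef
  set Z' := LinearMap.ker d ⊓ A' with hZ'def
  set Bm := Submodule.map d B ⊓ Z with hBmdef
  set Bm' := Submodule.map d B' ⊓ Z' with hBm'def
  have hZ'Z : Z' ≤ Z := inf_le_inf_left _ hA'
  have hBm'Bm : Bm' ≤ Bm := inf_le_inf (Submodule.map_mono hB') hZ'Z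
  have hrZ : ∀ v ∈ Z, r v ∈ Z' := by
    rintro v hv
    obtain ⟨hvk, hvA⟩ := Submodule.mem_inf.mp hv
    have hdv : d v = 0 := LinearMap.mem_ker.mp hvk
    refine Submodule.mem_inf.mpr ⟨?_, ?_⟩
    · rw [LinearMap.mem_ker, hrv, hdv, map_zero, sub_zero, map_sub, hdv, hd2 (h v)]
      simp
    · have := hcA v hvA
      rw [hrv, hdv, map_zero, sub_zero]
      rwa [hdv, map_zero, sub_zero] at this
  have hrZ'id : ∀ v ∈ Z', r v = v := by
    rintro v hv
    obtain ⟨hvk, hvA'⟩ := Submodule.mem_inf.mp hv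
    rw [hrv, hh0 v hvA', LinearMap.mem_ker.mp hvk, map_zero, map_zero, sub_zero, sub_zero]
  have hrBm : ∀ v ∈ Bm, r v ∈ Bm' := by
    rintro v hv
    obtain ⟨hvB, hvZ⟩ := Submodule.mem_inf.mp hv
    obtain ⟨w, hwB, rfl⟩ := hvB
    refine Submodule.mem_inf.mpr ⟨⟨w - d (h w) - h (d w), hcB w hwB, ?_⟩, hrZ _ hvZ⟩
    rw [hrv, map_sub, map_sub, hd2 (h w)]
    simp [hd2 w]
  have key : ∀ (P P' : Submodule k E) (_ : FiniteDimensional k ↥P), P' ≤ P →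
      (∀ v ∈ P, r v ∈ P') → (∀ v ∈ P', r v = v) →
      Module.finrank k ↥P = Module.finrank k ↥P' +
        Module.finrank k ↥(LinearMap.ker r ⊓ P) := by
    intro P P' _ hle hmap hid
    have hfr := LinearMap.finrank_range_add_finrank_ker (r ∘ₗ P.subtype)
    have hrange : LinearMap.range (r ∘ₗ P.subtype) = P' := by
      apply le_antisymm
      · rintro x ⟨⟨v, hv⟩, rfl⟩
        exact hmap v hv
      · intro v hv
        exact ⟨⟨v, hle hv⟩, hid v hv⟩
    have hker : Module.finrank k ↥(LinearMap.ker (r ∘ₗ P.subtype)) =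
        Module.finrank k ↥(LinearMap.ker r ⊓ P) := by
      rw [LinearMap.ker_comp]
      have heq : Submodule.comap P.subtype (LinearMap.ker r) =
          Submodule.comap P.subtype (LinearMap.ker r ⊓ P) := by
        ext ⟨v, hv⟩
        simp [Submodule.mem_comap, hv]
      rw [heq]
      exact (Submodule.comapSubtypeEquivOfLe inf_le_right).finrank_eq
    rw [hrange, hker] at hfr
    omega
  haveI hfdZ : FiniteDimensional k ↥Z := Submodule.finiteDimensional_of_le inf_le_right
  haveI hfdBm : FiniteDimensional k ↥Bm := Submodule.finiteDimensional_of_le inf_le_right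
  have e1 := key Z Z' hfdZ hZ'Z hrZ hrZ'id
  have e2 := key Bm Bm' hfdBm hBm'Bm hrBm
    (fun v hv => hrZ'id v (Submodule.mem_inf.mp hv).2)
  have hkk : LinearMap.ker r ⊓ Bm = LinearMap.ker r ⊓ Z := by
    apply le_antisymm
    · exact inf_le_inf_left _ inf_le_right
    · rintro v hv
      obtain ⟨hvr, hvZ⟩ := Submodule.mem_inf.mp hv
      obtain ⟨hvk, hvA⟩ := Submodule.mem_inf.mp hvZ
      have hdv : d v = 0 := LinearMap.mem_ker.mp hvk
      have hveq : v = d (h v) := by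
        have h0 := LinearMap.mem_ker.mp hvr
        rw [hrv, hdv, map_zero, sub_zero, sub_eq_zero] at h0
        exact h0
      exact Submodule.mem_inf.mpr ⟨hvr, Submodule.mem_inf.mpr
        ⟨⟨h v, hhB v hvA, hveq.symm⟩, hvZ⟩⟩
  rw [e1, e2, hkk]
  omega

end Abstract
section AbstractIso
variable {E : Type*} [AddCommGroup E] [Module k E]

lemma iso_finrank (d d' Φ Ψ : E →ₗ[k] E) (A B A' B' : Submodule k E)
    [FiniteDimensional k ↥A']
    (hd2' : ∀ v, d' (d' v) = 0)
    (hchainA : ∀ v ∈ A', d (Φ v) = Φ (d' v))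
    (hchainB : ∀ v ∈ B', d (Φ v) = Φ (d' v))
    (hmapA : Submodule.map Φ A' = A) (hmapB : Submodule.map Φ B' = B)
    (hinvA : ∀ v ∈ A', Ψ (Φ v) = v)
    (hinvdA : ∀ v ∈ Submodule.map d' A', Ψ (Φ v) = v)
    (hd'B'A' : Submodule.map d' B' ≤ A') :
    Module.finrank k ↥(LinearMap.ker d ⊓ A) -
      Module.finrank k ↥(Submodule.map d B ⊓ (LinearMap.ker d ⊓ A)) =
    Module.finrank k ↥(LinearMap.ker d' ⊓ A') -
      Module.finrank k ↥(Submodule.map d' B' ⊓ (LinearMap.ker d' ⊓ A')) := by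
  have hZ : Submodule.map Φ (LinearMap.ker d' ⊓ A') = LinearMap.ker d ⊓ A := by
    apply le_antisymm
    · rintro x ⟨v, hv, rfl⟩
      obtain ⟨hk', hA'v⟩ := Submodule.mem_inf.mp hv
      refine Submodule.mem_inf.mpr ⟨?_, hmapA ▸ Submodule.mem_map_of_mem hA'v⟩
      rw [LinearMap.mem_ker, hchainA v hA'v, LinearMap.mem_ker.mp hk', map_zero]
    · rintro x hx
      obtain ⟨hk, hA⟩ := Submodule.mem_inf.mp hx
      rw [← hmapA] at hA
      obtain ⟨v, hvA', rfl⟩ := hA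
      refine ⟨v, Submodule.mem_inf.mpr ⟨?_, hvA'⟩, rfl⟩
      have h1 : Φ (d' v) = 0 := by
        rw [← hchainA v hvA']
        exact LinearMap.mem_ker.mp hk
      have h2 := hinvdA (d' v) ⟨v, hvA', rfl⟩
      rw [LinearMap.mem_ker, ← h2, h1, map_zero]
  have hB : Submodule.map Φ (Submodule.map d' B' ⊓ (LinearMap.ker d' ⊓ A')) =
      Submodule.map d B ⊓ (LinearMap.ker d ⊓ A) := by
    apply le_antisymm
    · rintro x ⟨v, hv, rfl⟩
      obtain ⟨hvB, hvZ⟩ := Submodule.mem_inf.mp hv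
      obtain ⟨w, hwB', rfl⟩ := hvB
      refine Submodule.mem_inf.mpr ⟨?_, hZ ▸ Submodule.mem_map_of_mem hvZ⟩
      rw [← hchainB w hwB']
      exact ⟨Φ w, hmapB ▸ Submodule.mem_map_of_mem hwB', rfl⟩
    · rintro x hx
      obtain ⟨hxB, hxZ⟩ := Submodule.mem_inf.mp hx
      obtain ⟨w, hwB, rfl⟩ := hxB
      rw [← hmapB] at hwB
      obtain ⟨w', hw'B', rfl⟩ := hwB
      have hx' : d (Φ w') = Φ (d' w') := hchainB w' hw'B'
      have hd'w'A' : d' w' ∈ A' := hd'B'A' (Submodule.mem_map_of_mem hw'B')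
      refine ⟨d' w', Submodule.mem_inf.mpr ⟨Submodule.mem_map_of_mem hw'B',
        Submodule.mem_inf.mpr ⟨LinearMap.mem_ker.mpr (hd2' w'), hd'w'A'⟩⟩, hx'.symm⟩
  haveI : FiniteDimensional k ↥(LinearMap.ker d' ⊓ A') :=
    Submodule.finiteDimensional_of_le inf_le_right
  haveI : FiniteDimensional k ↥(Submodule.map d' B' ⊓ (LinearMap.ker d' ⊓ A')) :=
    Submodule.finiteDimensional_of_le inf_le_right
  rw [← hB, ← hZ,
    finrank_map_eq_of_leftinv k (fun v hv => hinvA v (Submodule.mem_inf.mp hv).2),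
    finrank_map_eq_of_leftinv k
      (fun v hv => hinvA v (Submodule.mem_inf.mp (Submodule.mem_inf.mp hv).2).2)]

end AbstractIso
/-! #### The deletion homotopy -/

noncomputable def hMap (x y : Finset V) :
    (Finset (Finset V) →₀ k) →ₗ[k] (Finset (Finset V) →₀ k) :=
  Finsupp.lsum k (fun τ => LinearMap.toSpanSingleton k _
    (if x ∈ τ ∧ y ∉ τ then taylorSign k (insert y τ) y • Finsupp.single (insert y τ) (1 : k)
     else 0))

lemma hMap_single (x y : Finset V) (τ : Finset (Finset V)) (c : k) :
    hMap k x y (Finsupp.single τ c) = c •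
      (if x ∈ τ ∧ y ∉ τ then taylorSign k (insert y τ) y • Finsupp.single (insert y τ) (1 : k)
       else 0) := by
  simp [hMap, LinearMap.toSpanSingleton_apply]

lemma homotopy_single {s : Finset V → Finset V} {S : Finset (Finset V)} {x y : Finset V}
    (hy : y ∈ S) (hyx : y ≠ x) (hs : s y ≤ s x)
    {W : Finset V} {τ : Finset (Finset V)} (hτS : τ ⊆ S) (hsup : τ.sup s = W) :
    Finsupp.single τ (1:k) - gDiff k s (hMap k x y (Finsupp.single τ (1:k))) -
      hMap k x y (gDiff k s (Finsupp.single τ (1:k))) ∈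
      gStrand k s (S.erase x) τ.card W := by
  by_cases hxτ : x ∈ τ
  case neg =>
    have h1 : hMap k x y (Finsupp.single τ (1:k)) = 0 := by
      rw [hMap_single, if_neg (fun hc => hxτ hc.1), smul_zero]
    have h2 : hMap k x y (gDiff k s (Finsupp.single τ (1:k))) = 0 := by
      rw [gDiff_single, one_smul, gD, map_sum]
      refine Finset.sum_eq_zero (fun G _ => ?_)
      split_ifs with hc
      · rw [map_smul, hMap_single,
          if_neg (fun hc2 => hxτ (Finset.mem_of_mem_erase hc2.1)), smul_zero, smul_zero]
      · exact map_zero _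
    rw [h1, h2, map_zero, sub_zero, sub_zero]
    exact single_mem_gStrand k (Finset.subset_erase.mpr ⟨hτS, hxτ⟩) rfl hsup
  case pos =>
  have hxy : x ≠ y := fun h => hyx h.symm
  have hsyτ : s y ≤ τ.sup s := hs.trans (Finset.le_sup hxτ)
  by_cases hyτ : y ∈ τ
  · -- `y ∈ τ`
    have h1 : hMap k x y (Finsupp.single τ (1:k)) = 0 := by
      rw [hMap_single, if_neg (fun hc => hc.2 hyτ), smul_zero]
    have hxey : x ∈ τ.erase y := Finset.mem_erase.mpr ⟨hxy, hxτ⟩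
    have hcy : (τ.erase y).sup s = τ.sup s := by
      have hle : s y ≤ (τ.erase y).sup s := hs.trans (Finset.le_sup hxey)
      rw [sup_eq_erase_sup hyτ]
      exact (sup_eq_right.mpr hle).symm
    have h2 : hMap k x y (gDiff k s (Finsupp.single τ (1:k))) = Finsupp.single τ (1:k) := by
      rw [gDiff_single, one_smul, gD, map_sum]
      rw [Finset.sum_eq_single y ?_ ?_]
      · rw [if_pos hcy, map_smul, hMap_single,
          if_pos ⟨hxey, Finset.notMem_erase y τ⟩, one_smul, Finset.insert_erase hyτ,
          smul_smul, taylorSign_mul_self, one_smul]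
      · intro G _ hGy
        split_ifs with hc
        · rw [map_smul, hMap_single,
            if_neg (fun hc2 => hc2.2 (Finset.mem_erase.mpr ⟨fun h => hGy h.symm, hyτ⟩)),
            smul_zero, smul_zero]
        · exact map_zero _
      · intro hy'
        exact absurd hyτ hy'
    rw [h1, h2, map_zero, sub_zero, sub_self]
    exact Submodule.zero_mem _
  · -- `y ∉ τ`
    have hσysup : (insert y τ).sup s = τ.sup s := sup_insert_of_le hsyτ
    have h1 : hMap k x y (Finsupp.single τ (1:k)) =
        taylorSign k (insert y τ) y • Finsupp.single (insert y τ) (1:k) := by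
      rw [hMap_single, if_pos ⟨hxτ, hyτ⟩, one_smul]
    have hdh : gDiff k s (hMap k x y (Finsupp.single τ (1:k))) =
        Finsupp.single τ (1:k) + ∑ G ∈ τ, taylorSign k (insert y τ) y •
          (if ((insert y τ).erase G).sup s = (insert y τ).sup s then
            taylorSign k (insert y τ) G • Finsupp.single ((insert y τ).erase G) (1:k)
           else 0) := by
      rw [h1, map_smul, gDiff_single, one_smul, gD, Finset.sum_insert hyτ, smul_add,
        Finset.smul_sum]
      congr 1
      rw [Finset.erase_insert hyτ, hσysup, if_pos rfl, smul_smul, taylorSign_mul_self, one_smul]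
    have hhd : hMap k x y (gDiff k s (Finsupp.single τ (1:k))) =
        ∑ G ∈ τ, (if (τ.erase G).sup s = τ.sup s then
          taylorSign k τ G • hMap k x y (Finsupp.single (τ.erase G) (1:k)) else 0) := by
      rw [gDiff_single, one_smul, gD, map_sum]
      refine Finset.sum_congr rfl (fun G _ => ?_)
      split_ifs with hc
      · rw [map_smul]
      · exact map_zero _
    rw [hdh, hhd]
    have hcomb : ∀ (v : Finset (Finset V) →₀ k) (aa bb : Finset V → Finset (Finset V) →₀ k),
        v - (v + ∑ G ∈ τ, aa G) - ∑ G ∈ τ, bb G = -∑ G ∈ τ, (aa G + bb G) := by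
      intro v aa bb
      rw [Finset.sum_add_distrib]
      abel
    rw [hcomb]
    refine Submodule.neg_mem _ (Submodule.sum_mem _ (fun G hG => ?_))
    by_cases hGx : G = x
    · subst hGx
      have hb : (if (τ.erase G).sup s = τ.sup s then
          taylorSign k τ G • hMap k G y (Finsupp.single (τ.erase G) (1:k)) else 0) = 0 := by
        split_ifs with hc
        · rw [hMap_single, if_neg (fun h2 => (Finset.notMem_erase G τ) h2.1),
            smul_zero, smul_zero]
        · rfl
      rw [hb, add_zero]
      split_ifs with hc
      · refine Submodule.smul_mem _ _ (Submodule.smul_mem _ _ (single_mem_gStrand k ?_ ?_ ?_))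
        · exact Finset.erase_subset_erase _ (Finset.insert_subset hy hτS)
        · rw [Finset.card_erase_of_mem (Finset.mem_insert_of_mem hxτ),
            Finset.card_insert_of_notMem hyτ]
          omega
        · rw [hc, hσysup, hsup]
      · rw [smul_zero]
        exact Submodule.zero_mem _
    · -- G ≠ x : the two terms cancel
      have hxG : x ∈ τ.erase G := Finset.mem_erase.mpr ⟨fun h => hGx h.symm, hxτ⟩
      have hyG : y ≠ G := fun h => hyτ (h ▸ hG)
      have herase : (insert y τ).erase G = insert y (τ.erase G) := Finset.erase_insert_of_ne hyG
      have hsyG : s y ≤ (τ.erase G).sup s := hs.trans (Finset.le_sup hxG)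
      have hcondeq : (((insert y τ).erase G).sup s = (insert y τ).sup s) ↔
          ((τ.erase G).sup s = τ.sup s) := by
        rw [herase, sup_insert_of_le hsyG, hσysup]
      by_cases hc : (τ.erase G).sup s = τ.sup s
      · rw [if_pos (hcondeq.mpr hc), if_pos hc, hMap_single,
          if_pos ⟨hxG, fun h => hyτ (Finset.mem_of_mem_erase h)⟩, one_smul, herase,
          smul_smul, smul_smul, ← add_smul]
        have e1 : taylorSign k τ G =
            (if toColex y < toColex G then -1 else 1) *
              taylorSign k (insert y τ) G := by
          have := taylorSign_erase k (τ := insert y τ) (G := y) (H := G)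
            (Finset.mem_insert_self y τ)
          rwa [Finset.erase_insert hyτ] at this
        have e2 : taylorSign k (insert y (τ.erase G)) y =
            (if toColex G < toColex y then -1 else 1) *
              taylorSign k (insert y τ) y := by
          have := taylorSign_erase k (τ := insert y τ) (G := G) (H := y)
            (Finset.mem_insert_of_mem hG)
          rwa [herase] at this
        have hpq := ite_lt_anticomm k (G := y) (H := G) hyG
        have hcoef : taylorSign k (insert y τ) y * taylorSign k (insert y τ) G +
            taylorSign k τ G * taylorSign k (insert y (τ.erase G)) y = 0 := by
          rw [e1, e2]
          linear_combination (taylorSign k (insert y τ) G * taylorSign k (insert y τ) y) * hpq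
        rw [hcoef, zero_smul]
        exact Submodule.zero_mem _
      · rw [if_neg (fun h => hc (hcondeq.mp h)), if_neg hc, smul_zero, add_zero]
        exact Submodule.zero_mem _
/-! #### Deletion of a redundant generator, and walking to `Γ` -/

lemma gStrand_mono {s : Finset V → Finset V} {S' S : Finset (Finset V)} (h : S' ⊆ S) (i : ℕ)
    (u : Finset V) : gStrand k s S' i u ≤ gStrand k s S i u := by
  apply Submodule.span_mono
  rintro x ⟨σ, h1, h2, h3, rfl⟩
  exact ⟨σ, h1.trans h, h2, h3, rfl⟩

lemma gBetti_erase {s : Finset V → Finset V} {S : Finset (Finset V)} {x y : Finset V}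
    (hy : y ∈ S) (hyx : y ≠ x) (hs : s y ≤ s x) (j : ℕ) (W : Finset V) :
    gBetti k s S j W = gBetti k s (S.erase x) j W := by
  rw [gBetti, gBetti]
  have hcore : ∀ (m : ℕ), ∀ v ∈ gStrand k s S m W,
      v - gDiff k s (hMap k x y v) - hMap k x y (gDiff k s v) ∈
        gStrand k s (S.erase x) m W := by
    intro m v hv
    have hle : gStrand k s S m W ≤ Submodule.comap
        (LinearMap.id - gDiff k s ∘ₗ hMap k x y - hMap k x y ∘ₗ gDiff k s)
        (gStrand k s (S.erase x) m W) := by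
      rw [gStrand, Submodule.span_le]
      rintro w ⟨τ, hτS, hcard, hsupeq, rfl⟩
      simp only [SetLike.mem_coe, Submodule.mem_comap, LinearMap.sub_apply,
        LinearMap.comp_apply, LinearMap.id_apply]
      exact hcard ▸ homotopy_single k hy hyx hs hτS hsupeq
    have h2 := hle hv
    simpa only [Submodule.mem_comap, LinearMap.sub_apply, LinearMap.comp_apply,
      LinearMap.id_apply] using h2
  refine deletion_finrank k (gDiff k s) (hMap k x y) _ _ _ _ (gDiff_gDiff k s)
    (gStrand_mono k (Finset.erase_subset _ _) j W)
    (gStrand_mono k (Finset.erase_subset _ _) (j + 1) W)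
    (hcore j) (hcore (j + 1)) ?_ ?_
  · -- hh0
    intro v hv
    have hle : gStrand k s (S.erase x) j W ≤ LinearMap.ker (hMap k x y) := by
      rw [gStrand, Submodule.span_le]
      rintro w ⟨τ, hτS, _, _, rfl⟩
      simp only [SetLike.mem_coe, LinearMap.mem_ker]
      rw [hMap_single, if_neg (fun hc => (Finset.ne_of_mem_erase (hτS hc.1)) rfl), smul_zero]
    exact LinearMap.mem_ker.mp (hle hv)
  · -- hhB
    intro v hv
    have hle : gStrand k s S j W ≤ Submodule.comap (hMap k x y)
        (gStrand k s S (j + 1) W) := by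
      rw [gStrand, Submodule.span_le]
      rintro w ⟨τ, hτS, hcard, hsupeq, rfl⟩
      simp only [SetLike.mem_coe, Submodule.mem_comap]
      rw [hMap_single, one_smul]
      split_ifs with hc
      · refine Submodule.smul_mem _ _ (single_mem_gStrand k
          (Finset.insert_subset hy hτS) ?_ ?_)
        · rw [Finset.card_insert_of_notMem hc.2, hcard]
        · rw [sup_insert_of_le (hs.trans (Finset.le_sup hc.1)), hsupeq]
      · exact Submodule.zero_mem _
    exact hle hv

lemma gBetti_sdiff {s : Finset V → Finset V} (j : ℕ) (W : Finset V)
    (K : Finset (Finset V)) :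
    ∀ (T : Finset (Finset V)), K ⊆ T →
    (∀ x ∈ K, ∃ y ∈ T \ K, s y ⊆ s x) →
    gBetti k s T j W = gBetti k s (T \ K) j W := by
  induction K using Finset.induction_on with
  | empty =>
    intro T _ _
    rw [Finset.sdiff_empty]
  | @insert a K' ha ih =>
    intro T hKT hwit
    obtain ⟨y, hyTK, hsy⟩ := hwit a (Finset.mem_insert_self a K')
    have hy1 : y ∈ T := (Finset.mem_sdiff.mp hyTK).1
    have hya : y ≠ a := fun h =>
      (Finset.mem_sdiff.mp hyTK).2 (h ▸ Finset.mem_insert_self a K')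
    have step := gBetti_erase k (S := T) (x := a) (y := y) hy1 hya
      (Finset.le_iff_subset.mpr hsy) j W
    rw [step]
    have hK'sub : K' ⊆ T.erase a := Finset.subset_erase.mpr
      ⟨fun z hz => hKT (Finset.mem_insert_of_mem hz), ha⟩
    have hwit' : ∀ x ∈ K', ∃ y' ∈ (T.erase a) \ K', s y' ⊆ s x := by
      intro x hx
      obtain ⟨y', hy', hsy'⟩ := hwit x (Finset.mem_insert_of_mem hx)
      obtain ⟨hy'T, hy'K⟩ := Finset.mem_sdiff.mp hy'
      refine ⟨y', Finset.mem_sdiff.mpr ⟨Finset.mem_erase.mpr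
        ⟨fun h => hy'K (h ▸ Finset.mem_insert_self a K'), hy'T⟩,
        fun h => hy'K (Finset.mem_insert_of_mem h)⟩, hsy'⟩
    rw [ih (T.erase a) hK'sub hwit']
    congr 1
    ext z
    simp only [Finset.mem_sdiff, Finset.mem_erase, Finset.mem_insert]
    tauto

lemma exists_minimal_subset (T : Finset (Finset V)) (B : Finset V) :
    B ∈ T → ∃ A ∈ minimals T, A ⊆ B := by
  induction B using Finset.strongInductionOn with
  | _ B ih =>
    intro hB
    by_cases h : ∀ C ∈ T, C ⊆ B → C = B
    · exact ⟨B, Finset.mem_filter.mpr ⟨hB, h⟩, Finset.Subset.refl B⟩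
    · push_neg at h
      obtain ⟨C, hCT, hCB, hCne⟩ := h
      obtain ⟨A, hA, hAC⟩ := ih C (Finset.ssubset_iff_subset_ne.mpr ⟨hCB, hCne⟩) hCT
      exact ⟨A, hA, hAC.trans hCB⟩

lemma gBetti_congr {s s' : Finset V → Finset V} {S : Finset (Finset V)}
    (h : ∀ σ, σ ⊆ S → σ.sup s = σ.sup s') (j : ℕ) (W : Finset V) :
    gBetti k s S j W = gBetti k s' S j W := by
  have hstr : ∀ i, gStrand k s S i W = gStrand k s' S i W := by
    intro i
    rw [gStrand, gStrand]
    apply congrArg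
    ext x
    constructor
    · rintro ⟨σ, h1, h2, h3, rfl⟩
      exact ⟨σ, h1, h2, (h σ h1) ▸ h3, rfl⟩
    · rintro ⟨σ, h1, h2, h3, rfl⟩
      exact ⟨σ, h1, h2, (h σ h1).symm ▸ h3, rfl⟩
  have hgD : ∀ σ, σ ⊆ S → gD k s σ = gD k s' σ := by
    intro σ hσ
    rw [gD, gD]
    refine Finset.sum_congr rfl (fun G _ => ?_)
    rw [h σ hσ, h (σ.erase G) ((Finset.erase_subset _ _).trans hσ)]
  have hker : ∀ i, gStrand k s S i W ≤ LinearMap.ker (gDiff k s - gDiff k s') := by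
    intro i
    rw [gStrand, Submodule.span_le]
    rintro xx ⟨σ, h1, h2, h3, rfl⟩
    simp only [SetLike.mem_coe, LinearMap.mem_ker, LinearMap.sub_apply]
    rw [gDiff_single, gDiff_single, one_smul, one_smul, hgD σ h1, sub_self]
  have hagree : ∀ i, ∀ v ∈ gStrand k s S i W, gDiff k s v = gDiff k s' v := by
    intro i v hv
    have h3 := LinearMap.mem_ker.mp (hker i hv)
    rw [LinearMap.sub_apply, sub_eq_zero] at h3
    exact h3
  have hZ : LinearMap.ker (gDiff k s) ⊓ gStrand k s S j W =
      LinearMap.ker (gDiff k s') ⊓ gStrand k s' S j W := by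
    rw [← hstr j]
    ext v
    simp only [Submodule.mem_inf, LinearMap.mem_ker]
    constructor
    · rintro ⟨h1, h2⟩
      exact ⟨(hagree j v h2).symm.trans h1, h2⟩
    · rintro ⟨h1, h2⟩
      exact ⟨(hagree j v h2).trans h1, h2⟩
  have hmapeq : Submodule.map (gDiff k s) (gStrand k s S (j + 1) W) =
      Submodule.map (gDiff k s') (gStrand k s' S (j + 1) W) := by
    rw [← hstr]
    apply le_antisymm
    · rintro xv ⟨v, hv, rfl⟩
      exact ⟨v, hv, (hagree (j + 1) v hv).symm⟩
    · rintro xv ⟨v, hv, rfl⟩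
      exact ⟨v, hv, hagree (j + 1) v hv⟩
  rw [gBetti, gBetti, hZ, hmapeq]

lemma mem_gammaOf_sdiff {Δ : Finset (Finset V)} {F A : Finset V} (hA : A ∈ gammaOf Δ F) :
    A \ F = A := by
  have h1 : A ∈ (Δ.erase F).image (fun G => G \ F) := Finset.mem_filter.mp hA |>.1
  obtain ⟨G, _, rfl⟩ := Finset.mem_image.mp h1
  exact sdiff_idem

lemma gBetti_gamma_eq (Δ : Finset (Finset V)) (F : Finset V) (j : ℕ) (W : Finset V) :
    gBetti k (fun G => G \ F) (Δ.erase F) j W = gBetti k id (gammaOf Δ F) j W := by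
  have hΓim : gammaOf Δ F ⊆ (Δ.erase F).image (fun G => G \ F) := Finset.filter_subset _ _
  have hDT : Δ.erase F ⊆ Δ.erase F ∪ gammaOf Δ F := Finset.subset_union_left
  have hΓT : gammaOf Δ F ⊆ Δ.erase F ∪ gammaOf Δ F := Finset.subset_union_right
  have hw1 : ∀ x ∈ (Δ.erase F ∪ gammaOf Δ F) \ Δ.erase F,
      ∃ y ∈ (Δ.erase F ∪ gammaOf Δ F) \ ((Δ.erase F ∪ gammaOf Δ F) \ Δ.erase F),
        (fun G => G \ F) y ⊆ (fun G => G \ F) x := by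
    intro x hx
    obtain ⟨hxT, hxD⟩ := Finset.mem_sdiff.mp hx
    have hxΓ : x ∈ gammaOf Δ F := (Finset.mem_union.mp hxT).resolve_left hxD
    obtain ⟨G, hGD, hGx⟩ := Finset.mem_image.mp (hΓim hxΓ)
    refine ⟨G, Finset.mem_sdiff.mpr ⟨hDT hGD, fun hc => (Finset.mem_sdiff.mp hc).2 hGD⟩, ?_⟩
    show G \ F ⊆ x \ F
    rw [mem_gammaOf_sdiff hxΓ, hGx]
  have h1 := gBetti_sdiff k j W ((Δ.erase F ∪ gammaOf Δ F) \ Δ.erase F)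
    (Δ.erase F ∪ gammaOf Δ F) Finset.sdiff_subset hw1
  rw [Finset.sdiff_sdiff_self_left, Finset.inter_eq_right.mpr hDT] at h1
  have hw2 : ∀ x ∈ (Δ.erase F ∪ gammaOf Δ F) \ gammaOf Δ F,
      ∃ y ∈ (Δ.erase F ∪ gammaOf Δ F) \ ((Δ.erase F ∪ gammaOf Δ F) \ gammaOf Δ F),
        (fun G => G \ F) y ⊆ (fun G => G \ F) x := by
    intro x hx
    obtain ⟨hxT, hxΓ⟩ := Finset.mem_sdiff.mp hx
    have hxD : x ∈ Δ.erase F := (Finset.mem_union.mp hxT).resolve_right hxΓ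
    obtain ⟨A, hAmin, hAsub⟩ := exists_minimal_subset ((Δ.erase F).image (fun G => G \ F))
      (x \ F) (Finset.mem_image_of_mem _ hxD)
    have hAΓ : A ∈ gammaOf Δ F := hAmin
    refine ⟨A, Finset.mem_sdiff.mpr ⟨hΓT hAΓ, fun hc => (Finset.mem_sdiff.mp hc).2 hAΓ⟩, ?_⟩
    show A \ F ⊆ x \ F
    rw [mem_gammaOf_sdiff hAΓ]
    exact hAsub
  have h2 := gBetti_sdiff k j W ((Δ.erase F ∪ gammaOf Δ F) \ gammaOf Δ F)
    (Δ.erase F ∪ gammaOf Δ F) Finset.sdiff_subset hw2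
  rw [Finset.sdiff_sdiff_self_left, Finset.inter_eq_right.mpr hΓT] at h2
  rw [← h1, h2]
  refine gBetti_congr k (fun σ hσ => ?_) j W
  exact Finset.sup_congr rfl (fun A hA => mem_gammaOf_sdiff (hσ hA))
/-! #### The cone isomorphism for a facet with a free vertex -/

/-- The sign `(-1)^{#{H ∈ τ : F < H}}`. -/
noncomputable def epsSign (F : Finset V) (τ : Finset (Finset V)) : k :=
  (-1 : k) ^ ((τ.filter (fun H => toColex F < toColex H)).card)

lemma epsSign_mul_self (F : Finset V) (τ : Finset (Finset V)) :
    epsSign k F τ * epsSign k F τ = 1 := by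
  rw [epsSign, ← mul_pow]
  norm_num

lemma epsSign_erase {F G : Finset V} {τ : Finset (Finset V)} (hG : G ∈ τ) :
    epsSign k F (τ.erase G) =
      (if toColex F < toColex G then -1 else 1) * epsSign k F τ :=
  neg_one_pow_filter_erase k _ hG

/-- The cone map `τ ↦ ±(τ ∪ {F})`. -/
noncomputable def phiMap (F : Finset V) :
    (Finset (Finset V) →₀ k) →ₗ[k] (Finset (Finset V) →₀ k) :=
  Finsupp.lsum k (fun τ => LinearMap.toSpanSingleton k _
    (epsSign k F τ • Finsupp.single (insert F τ) (1 : k)))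

/-- A left inverse of the cone map. -/
noncomputable def psiMap (F : Finset V) :
    (Finset (Finset V) →₀ k) →ₗ[k] (Finset (Finset V) →₀ k) :=
  Finsupp.lsum k (fun σ => LinearMap.toSpanSingleton k _
    (if F ∈ σ then epsSign k F (σ.erase F) • Finsupp.single (σ.erase F) (1 : k) else 0))

lemma phiMap_single (F : Finset V) (τ : Finset (Finset V)) (c : k) :
    phiMap k F (Finsupp.single τ c) = c • (epsSign k F τ • Finsupp.single (insert F τ) (1:k)) := by
  simp [phiMap, LinearMap.toSpanSingleton_apply]

lemma psiMap_single (F : Finset V) (σ : Finset (Finset V)) (c : k) :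
    psiMap k F (Finsupp.single σ c) = c •
      (if F ∈ σ then epsSign k F (σ.erase F) • Finsupp.single (σ.erase F) (1:k) else 0) := by
  simp [psiMap, LinearMap.toSpanSingleton_apply]

lemma sup_sdiff_eq (F : Finset V) (σ : Finset (Finset V)) :
    σ.sup (fun G => G \ F) = σ.sup id \ F := by
  ext a
  simp only [Finset.mem_sdiff, Finset.mem_sup, id_eq]
  constructor
  · rintro ⟨G, hG, haG, hna⟩
    exact ⟨⟨G, hG, haG⟩, hna⟩
  · rintro ⟨⟨G, hG, haG⟩, hna⟩
    exact ⟨G, hG, haG, hna⟩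

lemma union_sdiff_eq_iff (F A B : Finset V) : F ∪ A = F ∪ B ↔ A \ F = B \ F := by
  constructor <;> intro h <;> ext a <;> have h2 := Finset.ext_iff.mp h a <;>
    simp only [Finset.mem_union, Finset.mem_sdiff] at h2 ⊢ <;> tauto

lemma union_eq_of_sdiff_eq {F A W : Finset V} (h : A \ F = W \ F) (hFW : F ⊆ W)
    (hAW : A ⊆ W) : F ∪ A = W := by
  ext a
  have h2 := Finset.ext_iff.mp h a
  simp only [Finset.mem_sdiff] at h2
  rw [Finset.mem_union]
  constructor
  · rintro (hc | hc)
    exacts [hFW hc, hAW hc]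
  · intro hW
    by_cases haF : a ∈ F
    · exact Or.inl haF
    · exact Or.inr (h2.mpr ⟨hW, haF⟩).1

lemma phi_chain (F : Finset V) {x : V} (hxF : x ∈ F) {τ : Finset (Finset V)} (hFτ : F ∉ τ)
    (hxτ : ∀ G ∈ τ, x ∉ G) :
    gDiff k id (phiMap k F (Finsupp.single τ (1:k))) =
      phiMap k F (gDiff k (fun G => G \ F) (Finsupp.single τ (1:k))) := by
  have hFcond : ¬ (((insert F τ).erase F).sup id = (insert F τ).sup id) := by
    rw [Finset.erase_insert hFτ, Finset.sup_insert]
    intro hc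
    have h1 : x ∈ (id F) ⊔ τ.sup id := by
      rw [Finset.sup_eq_union, Finset.mem_union]
      exact Or.inl hxF
    rw [← hc] at h1
    obtain ⟨G, hG, hxG⟩ := Finset.mem_sup.mp h1
    exact hxτ G hG hxG
  rw [phiMap_single, one_smul, map_smul, gDiff_single, one_smul, gD,
    Finset.sum_insert hFτ, if_neg hFcond, zero_add, Finset.smul_sum,
    gDiff_single, one_smul, gD, map_sum]
  refine Finset.sum_congr rfl (fun G hG => ?_)
  have hFG : F ≠ G := fun h => hFτ (h ▸ hG)
  have her : (insert F τ).erase G = insert F (τ.erase G) := Finset.erase_insert_of_ne hFG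
  have hcond : (((insert F τ).erase G).sup id = (insert F τ).sup id) ↔
      ((τ.erase G).sup (fun K => K \ F) = τ.sup (fun K => K \ F)) := by
    rw [her, Finset.sup_insert, Finset.sup_insert, sup_sdiff_eq, sup_sdiff_eq]
    simp only [id_eq]
    exact union_sdiff_eq_iff _ _ _
  by_cases hc : (τ.erase G).sup (fun K => K \ F) = τ.sup (fun K => K \ F)
  · rw [if_pos (hcond.mpr hc), if_pos hc, map_smul, phiMap_single, one_smul, her,
      smul_smul, smul_smul]
    congr 1
    have e1 : taylorSign k τ G =
        (if toColex F < toColex G then -1 else 1) *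
          taylorSign k (insert F τ) G := by
      have := taylorSign_erase k (τ := insert F τ) (G := F) (H := G)
        (Finset.mem_insert_self F τ)
      rwa [Finset.erase_insert hFτ] at this
    have e2 := epsSign_erase k (F := F) hG
    rw [e1, e2]
    by_cases hlt : toColex F < toColex G
    · rw [if_pos hlt]; ring
    · rw [if_neg hlt]; ring
  · rw [if_neg (fun h => hc (hcond.mp h)), if_neg hc, smul_zero, map_zero]
lemma psi_phi_single {F : Finset V} {τ : Finset (Finset V)} (hFτ : F ∉ τ) :
    psiMap k F (phiMap k F (Finsupp.single τ (1:k))) = Finsupp.single τ (1:k) := by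
  rw [phiMap_single, one_smul, map_smul, psiMap_single, one_smul,
    if_pos (Finset.mem_insert_self F τ), Finset.erase_insert hFτ, smul_smul,
    epsSign_mul_self, one_smul]

lemma supported_le_ker_psiphi (F : Finset V) :
    Finsupp.supported k k {τ : Finset (Finset V) | F ∉ τ} ≤
      LinearMap.ker (psiMap k F ∘ₗ phiMap k F - LinearMap.id) := by
  rw [Finsupp.supported_eq_span_single, Submodule.span_le]
  rintro w ⟨τ, hτ, rfl⟩
  simp only [SetLike.mem_coe, LinearMap.mem_ker, LinearMap.sub_apply, LinearMap.comp_apply,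
    LinearMap.id_apply]
  rw [psi_phi_single k hτ, sub_self]

lemma gDiff_supported_le (s : Finset V → Finset V) (F : Finset V) :
    Submodule.map (gDiff k s) (Finsupp.supported k k {τ : Finset (Finset V) | F ∉ τ}) ≤
      Finsupp.supported k k {τ : Finset (Finset V) | F ∉ τ} := by
  rw [Finsupp.supported_eq_span_single, Submodule.map_span, Submodule.span_le]
  rintro w ⟨v, ⟨τ, hτ, rfl⟩, rfl⟩
  simp only [SetLike.mem_coe]
  rw [gDiff_single, one_smul, gD]
  refine Submodule.sum_mem _ (fun G _ => ?_)
  split_ifs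
  · refine Submodule.smul_mem _ _ (Submodule.subset_span
      (Set.mem_image_of_mem _ (fun hc => hτ (Finset.mem_of_mem_erase hc))))
  · exact Submodule.zero_mem _

lemma phi_map_strand (Δ : Finset (Finset V)) (F : Finset V) (hF : F ∈ Δ) {x : V}
    (hxF : x ∈ F) (hfree : ∀ G ∈ Δ, x ∈ G → G = F) (m : ℕ) :
    Submodule.map (phiMap k F) (gStrand k (fun G => G \ F) (Δ.erase F) m (vertexSet Δ \ F)) =
      gStrand k id Δ (m + 1) (vertexSet Δ) := by
  apply le_antisymm
  · rw [gStrand, Submodule.map_le_iff_le_comap, Submodule.span_le]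
    rintro w ⟨τ, hτ, hcard, hsup, rfl⟩
    simp only [SetLike.mem_coe, Submodule.mem_comap]
    rw [phiMap_single, one_smul]
    refine Submodule.smul_mem _ _ (single_mem_gStrand k ?_ ?_ ?_)
    · exact Finset.insert_subset hF (hτ.trans (Finset.erase_subset _ _))
    · rw [Finset.card_insert_of_notMem (fun hc => (Finset.mem_erase.mp (hτ hc)).1 rfl), hcard]
    · rw [Finset.sup_insert]
      simp only [id_eq]
      refine union_eq_of_sdiff_eq ?_ ?_ ?_
      · rw [← sup_sdiff_eq]
        exact hsup
      · exact fun a ha => Finset.mem_sup.mpr ⟨F, hF, ha⟩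
      · exact fun a ha => Finset.mem_sup.mpr (by
          obtain ⟨G, hG, haG⟩ := Finset.mem_sup.mp ha
          exact ⟨G, Finset.mem_of_mem_erase (hτ hG), haG⟩)
  · rw [gStrand, Submodule.span_le]
    rintro w ⟨σ, hσ, hcard, hsup, rfl⟩
    have hFσ : F ∈ σ := by
      have hxV : x ∈ σ.sup id := by
        rw [hsup]
        exact Finset.mem_sup.mpr ⟨F, hF, hxF⟩
      obtain ⟨G, hGσ, hxG⟩ := Finset.mem_sup.mp hxV
      have hGF := hfree G (hσ hGσ) hxG
      rwa [hGF] at hGσ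
    have key : Finsupp.single σ (1:k) =
        phiMap k F (epsSign k F (σ.erase F) • Finsupp.single (σ.erase F) (1:k)) := by
      rw [map_smul, phiMap_single, one_smul, smul_smul, epsSign_mul_self, one_smul,
        Finset.insert_erase hFσ]
    rw [SetLike.mem_coe, key]
    refine Submodule.mem_map_of_mem (Submodule.smul_mem _ _ (single_mem_gStrand k ?_ ?_ ?_))
    · exact Finset.erase_subset_erase _ hσ
    · rw [Finset.card_erase_of_mem hFσ, hcard]
      omega
    · rw [sup_sdiff_eq, ← hsup]
      conv_rhs => rw [sup_eq_erase_sup (s := id) hFσ]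
      show (σ.erase F).sup id \ F = (F ∪ (σ.erase F).sup id) \ F
      exact (Finset.union_sdiff_left ..).symm

lemma step1 (Δ : Finset (Finset V)) (F : Finset V) (hF : F ∈ Δ) {x : V} (hxF : x ∈ F)
    (hfree : ∀ G ∈ Δ, x ∈ G → G = F) (i : ℕ) :
    gBetti k id Δ (i + 1) (vertexSet Δ) =
      gBetti k (fun G => G \ F) (Δ.erase F) i (vertexSet Δ \ F) := by
  have hxτall : ∀ τ : Finset (Finset V), τ ⊆ Δ.erase F → (F ∉ τ ∧ ∀ G ∈ τ, x ∉ G) := by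
    intro τ hτ
    refine ⟨fun hc => (Finset.mem_erase.mp (hτ hc)).1 rfl, ?_⟩
    intro G hG hxG
    exact (Finset.mem_erase.mp (hτ hG)).1 (hfree G (Finset.mem_of_mem_erase (hτ hG)) hxG)
  have hchain : ∀ m, ∀ v ∈ gStrand k (fun G => G \ F) (Δ.erase F) m (vertexSet Δ \ F),
      gDiff k id (phiMap k F v) = phiMap k F (gDiff k (fun G => G \ F) v) := by
    intro m v hv
    have hle : gStrand k (fun G => G \ F) (Δ.erase F) m (vertexSet Δ \ F) ≤
        LinearMap.ker (gDiff k id ∘ₗ phiMap k F - phiMap k F ∘ₗ gDiff k (fun G => G \ F)) := by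
      rw [gStrand, Submodule.span_le]
      rintro w ⟨τ, hτ, _, _, rfl⟩
      obtain ⟨h1, h2⟩ := hxτall τ hτ
      simp only [SetLike.mem_coe, LinearMap.mem_ker, LinearMap.sub_apply, LinearMap.comp_apply]
      rw [phi_chain k F hxF h1 h2, sub_self]
    have h3 := LinearMap.mem_ker.mp (hle hv)
    rw [LinearMap.sub_apply, LinearMap.comp_apply, LinearMap.comp_apply, sub_eq_zero] at h3
    exact h3
  have hsupp : ∀ m, gStrand k (fun G => G \ F) (Δ.erase F) m (vertexSet Δ \ F) ≤
      Finsupp.supported k k {τ : Finset (Finset V) | F ∉ τ} := by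
    intro m
    rw [gStrand, Submodule.span_le]
    rintro w ⟨τ, hτ, _, _, rfl⟩
    exact Finsupp.single_mem_supported k _ (hxτall τ hτ).1
  have hinv : ∀ v ∈ Finsupp.supported k k {τ : Finset (Finset V) | F ∉ τ},
      psiMap k F (phiMap k F v) = v := by
    intro v hv
    have h3 := LinearMap.mem_ker.mp (supported_le_ker_psiphi k F hv)
    rw [LinearMap.sub_apply, LinearMap.comp_apply, LinearMap.id_apply, sub_eq_zero] at h3
    exact h3
  rw [gBetti, gBetti]
  refine iso_finrank k (gDiff k id) (gDiff k (fun G => G \ F)) (phiMap k F) (psiMap k F)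
    _ _ _ _ (gDiff_gDiff k _) (hchain i) (hchain (i + 1))
    (phi_map_strand k Δ F hF hxF hfree i) (phi_map_strand k Δ F hF hxF hfree (i + 1))
    (fun v hv => hinv v (hsupp i hv)) (fun v hv => ?_) (gDiff_gStrand_le k _ _ _ _)
  refine hinv v ?_
  obtain ⟨w, hw, rfl⟩ := hv
  exact gDiff_supported_le k _ F ⟨w, hsupp i hw, rfl⟩

/-- If `Δ` is a simplicial complex on `n` vertices with more than
one facet, `F` is a facet of `Δ` with a free vertex and
`Γ = (Δ ∖ ⟨F⟩)_{F̄}`, then `β_{i,n}(Δ) = β_{i-1, n-|F|}(Γ)` for all `i ≥ 1`. -/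
theorem gradedBetti_top_eq_gammaOf
    (Δ : Finset (Finset V)) (hfacet : IsAntichain (· ⊆ ·) (Δ : Set (Finset V)))
    (hne : ∅ ∉ Δ) (hfacets : 1 < Δ.card)
    (n : ℕ) (hn : (vertexSet Δ).card = n)
    (F : Finset V) (hF : F ∈ Δ) (hfree : HasFreeVertex Δ F)
    (i : ℕ) (hi : 1 ≤ i) :
    gradedBetti k Δ i n = gradedBetti k (gammaOf Δ F) (i - 1) (n - F.card) := by
  obtain ⟨x, hxF, hfreex⟩ := hfree
  obtain ⟨j, rfl⟩ : ∃ j, i = j + 1 := ⟨i - 1, (Nat.succ_pred_eq_of_pos hi).symm⟩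
  have hFV : F ⊆ vertexSet Δ := fun a ha => Finset.mem_sup.mpr ⟨F, hF, ha⟩
  have hpow : (vertexSet Δ).powersetCard n = {vertexSet Δ} := by
    rw [← hn]
    exact Finset.powersetCard_self _
  rw [gradedBetti, hpow, Finset.sum_singleton, multigradedBetti_eq_gBetti,
    step1 k Δ F hF hxF hfreex j, gBetti_gamma_eq k Δ F j (vertexSet Δ \ F)]
  have hsub : vertexSet (gammaOf Δ F) ⊆ vertexSet Δ \ F := by
    intro a ha
    rw [vertexSet] at ha
    obtain ⟨A, hA, haA⟩ := Finset.mem_sup.mp ha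
    obtain ⟨G, hG, rfl⟩ := Finset.mem_image.mp (Finset.mem_filter.mp hA).1
    simp only [id_eq] at haA
    obtain ⟨haG, hanF⟩ := Finset.mem_sdiff.mp haA
    exact Finset.mem_sdiff.mpr
      ⟨Finset.mem_sup.mpr ⟨G, Finset.mem_of_mem_erase hG, haG⟩, hanF⟩
  have hcard' : (vertexSet Δ \ F).card = n - F.card := by
    rw [Finset.card_sdiff_of_subset hFV, hn]
  simp only [Nat.add_sub_cancel]
  by_cases hveq : vertexSet (gammaOf Δ F) = vertexSet Δ \ F
  · have hpow2 : (vertexSet (gammaOf Δ F)).powersetCard (n - F.card) = {vertexSet Δ \ F} := by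
      rw [hveq, ← hcard']
      exact Finset.powersetCard_self _
    rw [gradedBetti, hpow2, Finset.sum_singleton, multigradedBetti_eq_gBetti]
  · have hss : vertexSet (gammaOf Δ F) ⊂ vertexSet Δ \ F :=
      ssubset_of_subset_of_ne hsub hveq
    have hlt : (vertexSet (gammaOf Δ F)).card < n - F.card := by
      rw [← hcard']
      exact Finset.card_lt_card hss
    rw [gradedBetti, Finset.powersetCard_eq_empty.mpr hlt, Finset.sum_empty]
    have hstrand0 : ∀ m, gStrand k id (gammaOf Δ F) m (vertexSet Δ \ F) = ⊥ := by
      intro m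
      rw [gStrand]
      convert Submodule.span_empty
      rw [Set.eq_empty_iff_forall_notMem]
      rintro w ⟨σ, hσ, _, hsupσ, rfl⟩
      have hle : σ.sup id ⊆ vertexSet (gammaOf Δ F) := by
        intro a ha
        rw [vertexSet]
        obtain ⟨G, hG, haG⟩ := Finset.mem_sup.mp ha
        exact Finset.mem_sup.mpr ⟨G, hσ hG, haG⟩
      rw [hsupσ] at hle
      exact hss.2 hle
    rw [gBetti, hstrand0 j, inf_bot_eq, inf_bot_eq]
    simp

end FacetPaper
end

section
/- Let Δ be a simplicial complex, F a facet of Δ with a free vertex, let Γ = (Δ∖⟨F⟩)_{F̄} be the simplicial complex whose facets are the minimal elements under inclusion of {G∖F : G a facet of Δ, G ≠ F}, and let u ⊆ F̄ = V(Δ)∖F. Then the induced subcollection Γ_[u] equals (Δ_[F∪u]∖⟨F⟩)_{F̄}, i.e., Γ_[u] is the simplicial complex whose facets are the minimal elements under inclusion of {G∖F : G a facet of Δ_[F∪u], G ≠ F}. -/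
namespace FacetPaper

variable (k : Type*) [Field k]
variable {V : Type*} [DecidableEq V] [LinearOrder V]

/-- If `F` is a facet of `Δ` with a free vertex,
`Γ = (Δ ∖ ⟨F⟩)_{F̄}` and `u ⊆ F̄ = V(Δ) ∖ F`, then
`Γ_[u] = (Δ_[F ∪ u] ∖ ⟨F⟩)_{F̄}`. -/
theorem induced_gammaOf
    (Δ : Finset (Finset V)) (hfacet : IsAntichain (· ⊆ ·) (Δ : Set (Finset V)))
    (F : Finset V) (hF : F ∈ Δ) (hfree : HasFreeVertex Δ F)
    (u : Finset V) (hu : u ⊆ vertexSet Δ \ F) :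
    induced (gammaOf Δ F) u = gammaOf (induced Δ (F ∪ u)) F := by
  have key : ∀ A : Finset V,
      A ∈ ((Δ.filter (fun G => G ⊆ F ∪ u)).erase F).image (fun G => G \ F) ↔
      A ∈ (Δ.erase F).image (fun G => G \ F) ∧ A ⊆ u := by
    intro A
    simp only [Finset.mem_image, Finset.mem_erase, Finset.mem_filter]
    constructor
    · rintro ⟨G, ⟨hGF, hGΔ, hGsub⟩, rfl⟩
      refine ⟨⟨G, ⟨hGF, hGΔ⟩, rfl⟩, ?_⟩
      intro x hx
      rcases Finset.mem_sdiff.mp hx with ⟨hxG, hxF⟩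
      rcases Finset.mem_union.mp (hGsub hxG) with h | h
      · exact absurd h hxF
      · exact h
    · rintro ⟨⟨G, ⟨hGF, hGΔ⟩, rfl⟩, hsub⟩
      refine ⟨G, ⟨hGF, hGΔ, ?_⟩, rfl⟩
      intro x hxG
      by_cases hxF : x ∈ F
      · exact Finset.mem_union_left _ hxF
      · exact Finset.mem_union_right _ (hsub (Finset.mem_sdiff.mpr ⟨hxG, hxF⟩))
  ext A
  simp only [gammaOf, minimals, Finset.mem_filter]
  simp only [induced, Finset.mem_filter, key]
  constructor
  · rintro ⟨⟨hA, hmin⟩, hAu⟩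
    exact ⟨⟨hA, hAu⟩, fun B hB hBA => hmin B hB.1 hBA⟩
  · rintro ⟨⟨hA, hAu⟩, hmin⟩
    exact ⟨⟨hA, fun B hB hBA => hmin B ⟨hB, hBA.trans hAu⟩ hBA⟩, hAu⟩

end FacetPaper
end

section
/- Let Δ be a simplicial complex, F a facet of Δ with a free vertex, let Γ = (Δ∖⟨F⟩)_{F̄} be the simplicial complex whose facets are the minimal elements under inclusion of {G∖F : G a facet of Δ, G ≠ F}, and let u ⊆ F̄ = V(Δ)∖F. If the induced subcollection Γ_[u] has exactly |u| vertices, then the induced subcollection Δ_[F∪u] has exactly |u| + |F| vertices. -/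
namespace FacetPaper

variable (k : Type*) [Field k]
variable {V : Type*} [DecidableEq V] [LinearOrder V]

/-- If `F` is a facet of `Δ` with a free vertex,
`Γ = (Δ ∖ ⟨F⟩)_{F̄}` and `u ⊆ F̄ = V(Δ) ∖ F`, and the induced subcollection
`Γ_[u]` has exactly `|u|` vertices, then `Δ_[F ∪ u]` has exactly `|u| + |F|`
vertices. -/
theorem card_vertexSet_induced_union
    (Δ : Finset (Finset V)) (hfacet : IsAntichain (· ⊆ ·) (Δ : Set (Finset V)))
    (F : Finset V) (hF : F ∈ Δ) (hfree : HasFreeVertex Δ F)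
    (u : Finset V) (hu : u ⊆ vertexSet Δ \ F)
    (hcard : (vertexSet (induced (gammaOf Δ F) u)).card = u.card) :
    (vertexSet (induced Δ (F ∪ u))).card = u.card + F.card := by
  have hdisj : Disjoint u F := by
    intro s hsu hsF x hx
    exact absurd (hu (hsu hx)) (by simp [Finset.mem_sdiff, hsF hx])
  have hΓu : vertexSet (induced (gammaOf Δ F) u) = u := by
    apply Finset.eq_of_subset_of_card_le _ (le_of_eq hcard.symm)
    intro x hx
    rw [vertexSet, Finset.mem_sup] at hx
    obtain ⟨A, hA, hxA⟩ := hx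
    exact (Finset.mem_filter.1 hA).2 hxA
  have hkey : vertexSet (induced Δ (F ∪ u)) = F ∪ u := by
    apply Finset.Subset.antisymm
    · intro x hx
      rw [vertexSet, Finset.mem_sup] at hx
      obtain ⟨A, hA, hxA⟩ := hx
      exact (Finset.mem_filter.1 hA).2 hxA
    · intro x hx
      rw [vertexSet, Finset.mem_sup]
      rcases Finset.mem_union.1 hx with hxF | hxu
      · exact ⟨F, Finset.mem_filter.2 ⟨hF, Finset.subset_union_left⟩, hxF⟩
      · rw [← hΓu, vertexSet, Finset.mem_sup] at hxu
        obtain ⟨A, hA, hxA⟩ := hxu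
        obtain ⟨hAΓ, hAu⟩ := Finset.mem_filter.1 hA
        have hAim : A ∈ (Δ.erase F).image (fun G => G \ F) :=
          (Finset.mem_filter.1 hAΓ).1
        obtain ⟨G, hG, rfl⟩ := Finset.mem_image.1 hAim
        refine ⟨G, Finset.mem_filter.2 ⟨Finset.mem_of_mem_erase hG, ?_⟩,
          (Finset.mem_sdiff.1 hxA).1⟩
        intro y hy
        by_cases hyF : y ∈ F
        · exact Finset.mem_union_left _ hyF
        · exact Finset.mem_union_right _ (hAu (Finset.mem_sdiff.2 ⟨hy, hyF⟩))
  rw [hkey, Finset.card_union_of_disjoint hdisj.symm, add_comm]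

end FacetPaper
end

section
/- Let S = k[a,b,c,d,e] over a field k and I = (ab, bc, cd, de). Then β_{3,5}(S/I) ≠ 0 and β_{2,3}(S/(bc,cd)) ≠ 0, but β_{1,4}(S/(ab,de)) = 0; in particular, the element m_u = bcd of LCM(I), whose only complement in LCM(I) is m_v = abde, has a complement supporting no nonzero first Betti number in homological degree 1 and internal degree 4. -/
namespace FacetPaper

variable (k : Type*) [Field k]
variable {V : Type*} [DecidableEq V] [LinearOrder V]

/-! ### Auxiliary computations -/

lemma taylorDiff_single (σ : Finset (Finset V)) :
    taylorDiff k (Finsupp.single σ (1 : k)) = taylorD k σ := by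
  rw [taylorDiff, Finsupp.lsum_single, LinearMap.toSpanSingleton_apply, one_smul]

/-- The big complex `I = (ab,bc,cd,de)`. -/
private abbrev Δ₁ : Finset (Finset (Fin 5)) := {{0,1},{1,2},{2,3},{3,4}}
private abbrev σa : Finset (Finset (Fin 5)) := {{0,1},{1,2},{3,4}}
private abbrev σb : Finset (Finset (Fin 5)) := {{0,1},{2,3},{3,4}}

lemma taylorD_σa : taylorD k (σa) = 0 := by
  rw [taylorD]
  refine Finset.sum_eq_zero fun F hF => ?_
  fin_cases hF <;> rw [if_neg (by decide)]

lemma taylorD_σb : taylorD k (σb) = 0 := by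
  rw [taylorD]
  refine Finset.sum_eq_zero fun F hF => ?_
  fin_cases hF <;> rw [if_neg (by decide)]

lemma strand3_eq :
    strand k Δ₁ 3 (Finset.univ : Finset (Fin 5)) =
      Submodule.span k {Finsupp.single σa (1 : k), Finsupp.single σb (1 : k)} := by
  rw [strand]
  congr 1
  ext x
  constructor
  · rintro ⟨σ, hσ, hc, hs, rfl⟩
    have hσ' : σ ∈ Δ₁.powerset := Finset.mem_powerset.mpr hσ
    have : σ = σa ∨ σ = σb := by
      fin_cases hσ' <;> first | exact Or.inl rfl | exact Or.inr rfl | exact absurd hc (by decide) | exact absurd hs (by decide)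
    rcases this with rfl | rfl
    · exact Or.inl rfl
    · exact Or.inr rfl
  · rintro (rfl | rfl)
    · exact ⟨σa, by decide, by decide, by decide, rfl⟩
    · exact ⟨σb, by decide, by decide, by decide, rfl⟩

lemma strand4_eq :
    strand k Δ₁ (3 + 1) (Finset.univ : Finset (Fin 5)) =
      Submodule.span k {Finsupp.single Δ₁ (1 : k)} := by
  rw [strand]
  congr 1
  ext x
  constructor
  · rintro ⟨σ, hσ, hc, hs, rfl⟩
    have hσ' : σ ∈ Δ₁.powerset := Finset.mem_powerset.mpr hσ
    have : σ = Δ₁ := by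
      fin_cases hσ' <;> first | rfl | exact absurd hc (by decide)
    subst this; rfl
  · rintro rfl
    exact ⟨Δ₁, by decide, by decide, by decide, rfl⟩

lemma cycles3_eq :
    taylorCycles k Δ₁ 3 (Finset.univ : Finset (Fin 5)) =
      Submodule.span k {Finsupp.single σa (1 : k), Finsupp.single σb (1 : k)} := by
  rw [taylorCycles, strand3_eq]
  refine inf_eq_right.mpr ?_
  rw [Submodule.span_le]
  rintro x (rfl | rfl) <;>
    simp only [SetLike.mem_coe, LinearMap.mem_ker, taylorDiff_single, taylorD_σa, taylorD_σb]

lemma betti_35 : gradedBetti k Δ₁ 3 5 ≠ 0 := by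
  have hps : (vertexSet Δ₁).powersetCard 5 = {(Finset.univ : Finset (Fin 5))} := by decide
  rw [gradedBetti, hps, Finset.sum_singleton]
  rw [multigradedBetti, cycles3_eq]
  -- dimension of the cycles is 2
  have hli : LinearIndependent k ![Finsupp.single σa (1 : k), Finsupp.single σb (1 : k)] := by
    rw [LinearIndependent.pair_iff]
    intro s t hst
    have h1 := DFunLike.congr_fun hst σa
    have h2 := DFunLike.congr_fun hst σb
    simp [Finsupp.single_apply, show σa ≠ σb by decide, show σb ≠ σa by decide] at h1 h2
    exact ⟨h1, h2⟩
  have hrank : Module.finrank k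
      ↥(Submodule.span k {Finsupp.single σa (1 : k), Finsupp.single σb (1 : k)}) = 2 := by
    have h := finrank_span_eq_card hli
    rw [Matrix.range_cons_cons_empty] at h
    simpa using h
  rw [hrank]
  -- dimension of the boundaries is at most 1
  have hb : taylorBoundaries k Δ₁ 3 (Finset.univ : Finset (Fin 5)) =
      Submodule.span k {taylorDiff k (Finsupp.single Δ₁ (1 : k))} := by
    rw [taylorBoundaries, strand4_eq, Submodule.map_span, Set.image_singleton]
  set v := taylorDiff k (Finsupp.single Δ₁ (1 : k)) with hv
  haveI : Module.Finite k ↥(Submodule.span k ({v} : Set (Finset (Finset (Fin 5)) →₀ k))) :=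
    FiniteDimensional.span_of_finite k (Set.finite_singleton v)
  have hmono : Module.finrank k
      ↥(taylorBoundaries k Δ₁ 3 (Finset.univ : Finset (Fin 5)) ⊓
        taylorCycles k Δ₁ 3 (Finset.univ : Finset (Fin 5))) ≤
      Module.finrank k ↥(Submodule.span k ({v} : Set (Finset (Finset (Fin 5)) →₀ k))) :=
    Submodule.finrank_mono (hb ▸ inf_le_left)
  have hone : Module.finrank k
      ↥(Submodule.span k ({v} : Set (Finset (Finset (Fin 5)) →₀ k))) ≤ 1 := by
    simpa using finrank_span_le_card ({v} : Set (Finset (Finset (Fin 5)) →₀ k))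
  rw [cycles3_eq] at hmono
  omega

/-- The small complex `(bc, cd)`. -/
private abbrev Δ₂ : Finset (Finset (Fin 5)) := {{1,2},{2,3}}

lemma betti_23 : gradedBetti k Δ₂ 2 3 ≠ 0 := by
  have hps : (vertexSet Δ₂).powersetCard 3 = {({1,2,3} : Finset (Fin 5))} := by decide
  rw [gradedBetti, hps, Finset.sum_singleton, multigradedBetti]
  have hstr : strand k Δ₂ 2 ({1,2,3} : Finset (Fin 5)) =
      Submodule.span k {Finsupp.single Δ₂ (1 : k)} := by
    rw [strand]
    congr 1
    ext x
    constructor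
    · rintro ⟨σ, hσ, hc, hs, rfl⟩
      have hσ' : σ ∈ Δ₂.powerset := Finset.mem_powerset.mpr hσ
      have : σ = Δ₂ := by
        fin_cases hσ' <;> first | rfl | exact absurd hc (by decide)
      subst this; rfl
    · rintro rfl
      exact ⟨Δ₂, by decide, by decide, by decide, rfl⟩
  have hD : taylorD k Δ₂ = 0 := by
    rw [taylorD]
    refine Finset.sum_eq_zero fun F hF => ?_
    fin_cases hF <;> rw [if_neg (by decide)]
  have hcyc : taylorCycles k Δ₂ 2 ({1,2,3} : Finset (Fin 5)) =
      Submodule.span k {Finsupp.single Δ₂ (1 : k)} := by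
    rw [taylorCycles, hstr]
    refine inf_eq_right.mpr ?_
    rw [Submodule.span_le]
    rintro x rfl
    simp only [SetLike.mem_coe, LinearMap.mem_ker, taylorDiff_single, hD]
  have hrank : Module.finrank k
      ↥(Submodule.span k {Finsupp.single Δ₂ (1 : k)}) = 1 :=
    finrank_span_singleton (fun h => one_ne_zero (Finsupp.single_eq_zero.mp h))
  have hbd : taylorBoundaries k Δ₂ 2 ({1,2,3} : Finset (Fin 5)) = ⊥ := by
    have hstr3 : strand k Δ₂ (2 + 1) ({1,2,3} : Finset (Fin 5)) = ⊥ := by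
      rw [strand]
      convert Submodule.span_empty
      ext x
      simp only [Set.mem_setOf_eq, Set.mem_empty_iff_false, iff_false]
      rintro ⟨σ, hσ, hc, -, -⟩
      have := Finset.card_le_card hσ
      rw [hc] at this
      exact absurd this (by decide)
    rw [taylorBoundaries, hstr3, Submodule.map_bot]
  rw [hcyc, hrank, hbd, bot_inf_eq, finrank_bot]
  omega

/-- The complex `(ab, de)`. -/
private abbrev Δ₃ : Finset (Finset (Fin 5)) := {{0,1},{3,4}}

lemma betti_14 : gradedBetti k Δ₃ 1 4 = 0 := by
  have hps : (vertexSet Δ₃).powersetCard 4 = {({0,1,3,4} : Finset (Fin 5))} := by decide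
  rw [gradedBetti, hps, Finset.sum_singleton, multigradedBetti]
  have hstr : strand k Δ₃ 1 ({0,1,3,4} : Finset (Fin 5)) = ⊥ := by
    rw [strand]
    convert Submodule.span_empty
    ext x
    simp only [Set.mem_setOf_eq, Set.mem_empty_iff_false, iff_false]
    rintro ⟨σ, hσ, hc, hs, -⟩
    have hσ' : σ ∈ Δ₃.powerset := Finset.mem_powerset.mpr hσ
    fin_cases hσ' <;> first | exact absurd hc (by decide) | exact absurd hs (by decide)
  have hcyc : taylorCycles k Δ₃ 1 ({0,1,3,4} : Finset (Fin 5)) = ⊥ := by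
    rw [taylorCycles, hstr, inf_bot_eq]
  rw [hcyc, finrank_bot]
  exact Nat.zero_sub _


/-- For `S = k[a,b,c,d,e]` (variables indexed by `Fin 5`) and
`I = (ab, bc, cd, de)`, the facet complex of `I` is `{{0,1},{1,2},{2,3},{3,4}}`.
Then `β_{3,5}(S/I) ≠ 0` and `β_{2,3}(S/(bc,cd)) ≠ 0` but `β_{1,4}(S/(ab,de)) = 0`;
moreover the only complement of `m_u = bcd` (support `{1,2,3}`) in `LCM(I)` is
`m_v = abde` (support `{0,1,3,4}`), so `m_u` has a complement supporting no nonzero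
Betti number in homological degree `1` and internal degree `4`. -/
theorem example_path_complement :
    gradedBetti k ({{0,1},{1,2},{2,3},{3,4}} : Finset (Finset (Fin 5))) 3 5 ≠ 0 ∧
    gradedBetti k ({{1,2},{2,3}} : Finset (Finset (Fin 5))) 2 3 ≠ 0 ∧
    gradedBetti k ({{0,1},{3,4}} : Finset (Finset (Fin 5))) 1 4 = 0 ∧
    LcmComplements ({{0,1},{1,2},{2,3},{3,4}} : Finset (Finset (Fin 5)))
      ({1,2,3} : Finset (Fin 5)) ({0,1,3,4} : Finset (Fin 5)) ∧
    (∀ w : Finset (Fin 5),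
      MemLcmLattice ({{0,1},{1,2},{2,3},{3,4}} : Finset (Finset (Fin 5))) w →
      w ≠ ∅ →
      w ≠ vertexSet ({{0,1},{1,2},{2,3},{3,4}} : Finset (Finset (Fin 5))) →
      LcmComplements ({{0,1},{1,2},{2,3},{3,4}} : Finset (Finset (Fin 5)))
        ({1,2,3} : Finset (Fin 5)) w →
      w = ({0,1,3,4} : Finset (Fin 5))) := by
  refine ⟨betti_35 k, betti_23 k, betti_14 k, ⟨by decide, by decide⟩, ?_⟩
  rintro w ⟨A, hA, rfl⟩ hne hnv ⟨h1, -⟩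
  have hA' : A ∈ (({{0,1},{1,2},{2,3},{3,4}} : Finset (Finset (Fin 5)))).powerset :=
    Finset.mem_powerset.mpr hA
  fin_cases hA' <;>
    first
      | decide
      | exact absurd h1 (by decide)
      | exact absurd (by decide) hne
      | exact absurd (by decide) hnv

end FacetPaper
end

section
/- Every leaf of a simplicial complex contains a free vertex: if F is a leaf of a simplicial complex Δ, then there exists a vertex of F that belongs to no facet of Δ other than F. -/
namespace FacetPaper

variable (k : Type*) [Field k]
variable {V : Type*} [DecidableEq V] [LinearOrder V]

/-- Every leaf of a simplicial complex contains a free vertex: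
a vertex belonging to no facet other than the leaf itself. -/
theorem exists_freeVertex_of_isLeaf
    (Δ : Finset (Finset V)) (hfacet : IsAntichain (· ⊆ ·) (Δ : Set (Finset V)))
    (hne : ∅ ∉ Δ) (F : Finset V) (hF : IsLeaf Δ F) :
    ∃ x ∈ F, ∀ G ∈ Δ, x ∈ G → G = F := by
  obtain ⟨hFΔ, hcase⟩ := hF
  rcases hcase with h | ⟨G, hGΔ, hGF, hjoint⟩
  · have hFne : F.Nonempty := by
      rcases Finset.eq_empty_or_nonempty F with rfl | h'
      · exact absurd hFΔ hne
      · exact h'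
    obtain ⟨x, hx⟩ := hFne
    refine ⟨x, hx, fun H hH _ => ?_⟩
    rw [h] at hH
    exact Finset.mem_singleton.mp hH
  · by_contra hcon
    push_neg at hcon
    have hsub : F ⊆ G := by
      intro x hxF
      obtain ⟨H, hHΔ, hxH, hHF⟩ := hcon x hxF
      exact hjoint H hHΔ hHF (Finset.mem_inter.mpr ⟨hxF, hxH⟩)
    exact hfacet hFΔ hGΔ (Ne.symm hGF) hsub

end FacetPaper
end
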